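/- Let r, t ∈ ℕ and let s_n ∈ ℂ^{r×t} (n ∈ ℕ) be such that for every z ∈ 𝔻 the series S(z) = Σ_{n=0}^∞ s_n·zⁿ converges. Then I_r − S(z)·S(z)ᴴ is positive semidefinite for every z ∈ 𝔻 if and only if for every finitely supported g : ℕ → ℂ^t one has Σ_{n=0}^∞ ‖Σ_{k=0}^n s_{n−k}·g_k‖² ≤ Σ_{k=0}^∞ ‖g_k‖²; that is, if and only if the lower triangular block Toeplitz operator T_s = (s_{j−k})_{j≥k} is a contraction from ℓ²(ℕ, ℂ^t) into ℓ²(ℕ, ℂ^r). -/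

import Mathlib

open Matrix
open scoped ComplexOrder

noncomputable section

/-- Squared Euclidean norm of a complex vector. -/
def sqnormC {r : ℕ} (v : Fin r → ℂ) : ℝ := ∑ a, ‖v a‖ ^ 2

open Finset in
section

namespace SchurAux

variable {q q' : ℕ}

/-- complex inner product, linear in the first slot. -/
def cip (v w : Fin q → ℂ) : ℂ := ∑ a, v a * (starRingEnd ℂ) (w a)

def enorm (v : Fin q → ℂ) : ℝ := Real.sqrt (sqnormC v)

lemma sqnormC_nonneg (v : Fin q → ℂ) : 0 ≤ sqnormC v :=
  Finset.sum_nonneg fun _ _ => sq_nonneg _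

lemma enorm_nonneg (v : Fin q → ℂ) : 0 ≤ enorm v := Real.sqrt_nonneg _

lemma enorm_sq (v : Fin q → ℂ) : enorm v ^ 2 = sqnormC v :=
  Real.sq_sqrt (sqnormC_nonneg v)

lemma enorm_eq_norm (v : Fin q → ℂ) :
    enorm v = ‖(WithLp.equiv 2 (Fin q → ℂ)).symm v‖ := by
  rw [EuclideanSpace.norm_eq]; rfl

lemma cip_eq_inner (v w : Fin q → ℂ) :
    cip v w = inner ℂ ((WithLp.equiv 2 (Fin q → ℂ)).symm w) ((WithLp.equiv 2 (Fin q → ℂ)).symm v) := by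
  rw [PiLp.inner_apply]
  simp only [cip, RCLike.inner_apply]
  exact Finset.sum_congr rfl fun a _ => rfl

lemma norm_cip_le (v w : Fin q → ℂ) : ‖cip v w‖ ≤ enorm v * enorm w := by
  rw [cip_eq_inner, enorm_eq_norm, enorm_eq_norm, mul_comm]
  exact norm_inner_le_norm _ _

lemma cip_self (v : Fin q → ℂ) : cip v v = (sqnormC v : ℂ) := by
  simp only [cip, sqnormC, Complex.mul_conj']
  push_cast
  ring

lemma enorm_triangle (v w : Fin q → ℂ) : enorm (v + w) ≤ enorm v + enorm w := by
  simp only [enorm_eq_norm]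
  exact norm_add_le _ _

lemma sqnormC_smul (c : ℂ) (v : Fin q → ℂ) : sqnormC (c • v) = ‖c‖ ^ 2 * sqnormC v := by
  simp only [sqnormC, Pi.smul_apply, smul_eq_mul, norm_mul, mul_pow, Finset.mul_sum]

lemma norm_apply_le_enorm (v : Fin q → ℂ) (a : Fin q) : ‖v a‖ ≤ enorm v := by
  rw [enorm]
  rw [show ‖v a‖ = Real.sqrt (‖v a‖^2) by rw [Real.sqrt_sq (norm_nonneg _)]]
  apply Real.sqrt_le_sqrt
  exact Finset.single_le_sum (f := fun a => ‖v a‖ ^ 2) (fun _ _ => sq_nonneg _) (mem_univ a)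

/-- adjoint identity -/
lemma cip_mulVec (A : Matrix (Fin q) (Fin q') ℂ) (u : Fin q' → ℂ) (x : Fin q → ℂ) :
    cip (A *ᵥ u) x = cip u (Aᴴ *ᵥ x) := by
  simp only [cip, mulVec, dotProduct, conjTranspose_apply, Finset.sum_mul, Finset.mul_sum,
    map_sum, _root_.map_mul, RingHomCompTriple.comp_apply, RingHom.id_apply, starRingEnd_self_apply]
  rw [Finset.sum_comm]
  refine Finset.sum_congr rfl fun j _ => Finset.sum_congr rfl fun i _ => ?_
  ring_nf
  simp [mul_comm, mul_assoc, mul_left_comm]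

/-- contraction transfer via Cauchy-Schwarz -/
lemma sq_mulVec_le (A : Matrix (Fin q) (Fin q') ℂ)
    (h : ∀ x : Fin q → ℂ, sqnormC (Aᴴ *ᵥ x) ≤ sqnormC x) (u : Fin q' → ℂ) :
    sqnormC (A *ᵥ u) ≤ sqnormC u := by
  have h1 : sqnormC (A *ᵥ u) = ‖cip (A *ᵥ u) (A *ᵥ u)‖ := by
    rw [cip_self]
    rw [Complex.norm_real, Real.norm_of_nonneg (sqnormC_nonneg _)]
  have h2 : ‖cip (A *ᵥ u) (A *ᵥ u)‖ ≤ enorm u * enorm (Aᴴ *ᵥ (A *ᵥ u)) := by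
    rw [cip_mulVec]
    exact norm_cip_le _ _
  have h3 : enorm (Aᴴ *ᵥ (A *ᵥ u)) ≤ enorm (A *ᵥ u) := by
    apply Real.sqrt_le_sqrt
    exact h _
  have h4 : sqnormC (A *ᵥ u) ≤ enorm u * enorm (A *ᵥ u) := by
    calc sqnormC (A *ᵥ u) = ‖cip (A *ᵥ u) (A *ᵥ u)‖ := h1
    _ ≤ enorm u * enorm (Aᴴ *ᵥ (A *ᵥ u)) := h2
    _ ≤ enorm u * enorm (A *ᵥ u) := by
        exact mul_le_mul_of_nonneg_left h3 (enorm_nonneg u)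
  rcases eq_or_lt_of_le (enorm_nonneg (A *ᵥ u)) with h0 | h0
  · rw [← enorm_sq, ← h0]; norm_num; exact sqnormC_nonneg u
  · have : enorm (A *ᵥ u) ≤ enorm u := by
      have := h4
      rw [← enorm_sq (A *ᵥ u), sq] at this
      exact le_of_mul_le_mul_right (by linarith [this]) h0
    calc sqnormC (A *ᵥ u) = enorm (A *ᵥ u) ^ 2 := (enorm_sq _).symm
    _ ≤ enorm u ^ 2 := by
        apply pow_le_pow_left₀ (enorm_nonneg _) this
    _ = sqnormC u := enorm_sq u

/-- PSD characterization -/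
lemma posSemidef_iff (A : Matrix (Fin q) (Fin q') ℂ) :
    ((1 : Matrix (Fin q) (Fin q) ℂ) - A * Aᴴ).PosSemidef ↔
      ∀ x : Fin q → ℂ, sqnormC (Aᴴ *ᵥ x) ≤ sqnormC x := by
  have key : ∀ x : Fin q → ℂ, dotProduct (star x) (((1 : Matrix (Fin q) (Fin q) ℂ) - A * Aᴴ) *ᵥ x)
      = ((sqnormC x - sqnormC (Aᴴ *ᵥ x) : ℝ) : ℂ) := by
    intro x
    have e1 : dotProduct (star x) (((1 : Matrix (Fin q) (Fin q) ℂ)) *ᵥ x) = (sqnormC x : ℂ) := by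
      rw [Matrix.one_mulVec, ← cip_self]
      simp [cip, dotProduct, mul_comm]
    have e2 : dotProduct (star x) ((A * Aᴴ) *ᵥ x) = (sqnormC (Aᴴ *ᵥ x) : ℂ) := by
      rw [← Matrix.mulVec_mulVec]
      rw [dotProduct_mulVec, ← Matrix.conjTranspose_conjTranspose A,
        ← Matrix.star_mulVec, Matrix.conjTranspose_conjTranspose, ← cip_self]
      simp [cip, dotProduct, mul_comm]
    rw [Matrix.sub_mulVec, dotProduct_sub, e1, e2]
    push_cast
    ring
  constructor
  · intro hpsd x
    have := (posSemidef_iff_dotProduct_mulVec.mp hpsd).2 x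
    rw [key x] at this
    rw [Complex.zero_le_real] at this
    linarith
  · intro hb
    refine posSemidef_iff_dotProduct_mulVec.mpr ⟨?_, ?_⟩
    · exact (Matrix.isHermitian_one).sub (Matrix.isHermitian_mul_conjTranspose_self A)
    · intro x
      rw [key x, Complex.zero_le_real]
      linarith [hb x]

set_option maxHeartbeats 1000000 in
/-- geometric bound: summability at an interior real point gives absolute
geometric summability at smaller radii. -/
lemma summable_pow_mul_norm {f : ℕ → ℂ} {ρ : ℝ} (h0 : 0 ≤ ρ) (h1 : ρ < 1)
    (hs : Summable fun n => (((1 + ρ)/2 : ℝ) : ℂ) ^ n * f n) :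
    Summable fun n => ρ ^ n * ‖f n‖ := by
  set ρ' : ℝ := (1 + ρ)/2 with hρ'
  have hρ0 : 0 < ρ' := by rw [hρ']; linarith
  have hρρ : ρ < ρ' := by rw [hρ']; linarith
  have hbdd : BddAbove (Set.range fun n => ‖((ρ' : ℂ)) ^ n * f n‖) := by
    have := hs.tendsto_atTop_zero
    have hn : Filter.Tendsto (fun n => ‖((ρ' : ℂ)) ^ n * f n‖) Filter.atTop (nhds 0) := by
      simpa using this.norm
    exact hn.bddAbove_range
  obtain ⟨C, hC⟩ := hbdd
  have hC' : ∀ n, ρ' ^ n * ‖f n‖ ≤ C := by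
    intro n
    have := hC ⟨n, rfl⟩
    simpa [norm_mul, norm_pow, Complex.norm_real, abs_of_pos hρ0] using this
  have hgs : Summable (fun n => C * (ρ/ρ')^n) := by
    apply Summable.mul_left
    apply summable_geometric_of_lt_one (by positivity)
    rw [div_lt_one hρ0]; exact hρρ
  refine Summable.of_nonneg_of_le (fun n => by positivity) (fun n => ?_) hgs
  have key : ρ ^ n * ‖f n‖ = (ρ/ρ')^n * (ρ'^n * ‖f n‖) := by
    rw [← mul_assoc, ← mul_pow, div_mul_cancel₀ _ (ne_of_gt hρ0)]
  rw [key]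
  calc (ρ/ρ')^n * (ρ'^n * ‖f n‖) ≤ (ρ/ρ')^n * C := by
        apply mul_le_mul_of_nonneg_left (hC' n) (by positivity)
  _ = C * (ρ/ρ')^n := mul_comm _ _

lemma cip_sum_left {ι : Type*} (sf : Finset ι) (f : ι → Fin q → ℂ) (w : Fin q → ℂ) :
    cip (∑ i ∈ sf, f i) w = ∑ i ∈ sf, cip (f i) w := by
  simp only [cip, Finset.sum_apply, Finset.sum_mul]
  exact Finset.sum_comm

lemma cip_sum_right {ι : Type*} (sf : Finset ι) (v : Fin q → ℂ) (f : ι → Fin q → ℂ) :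
    cip v (∑ i ∈ sf, f i) = ∑ i ∈ sf, cip v (f i) := by
  simp only [cip, Finset.sum_apply, map_sum, Finset.mul_sum]
  exact Finset.sum_comm

lemma cip_smul_left (c : ℂ) (v w : Fin q → ℂ) : cip (c • v) w = c * cip v w := by
  simp only [cip, Pi.smul_apply, smul_eq_mul, Finset.mul_sum, mul_assoc]

lemma cip_smul_right (c : ℂ) (v w : Fin q → ℂ) :
    cip v (c • w) = (starRingEnd ℂ) c * cip v w := by
  simp only [cip, Pi.smul_apply, smul_eq_mul, _root_.map_mul, Finset.mul_sum]
  refine Finset.sum_congr rfl fun a _ => by ring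

set_option maxHeartbeats 1000000 in
/-- discrete Parseval identity at the `N`-th roots of unity scaled by `ρ`. -/
lemma parseval (N : ℕ) (hN : N ≠ 0) (ρ : ℝ) (b : ℕ → Fin q → ℂ) :
    ∑ j ∈ Finset.range N, sqnormC (∑ m ∈ Finset.range N,
        ((ρ : ℂ) * Complex.exp (2 * Real.pi * Complex.I / N) ^ j) ^ m • b m)
      = N * ∑ m ∈ Finset.range N, ρ ^ (2 * m) * sqnormC (b m) := by
  set u := Complex.exp (2 * (Real.pi : ℂ) * Complex.I / N) with hu
  have hprim : IsPrimitiveRoot u N := Complex.isPrimitiveRoot_exp N hN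
  have huN : u ^ N = 1 := hprim.pow_eq_one
  have hconj : (starRingEnd ℂ) u = u⁻¹ := by
    rw [hu, ← Complex.exp_conj, ← Complex.exp_neg]
    congr 1
    simp [map_div₀, Complex.conj_I, map_ofNat]
    ring
  -- the orthogonality relation
  have key : ∀ m ∈ Finset.range N, ∀ m' ∈ Finset.range N,
      (∑ j ∈ Finset.range N, ((ρ:ℂ) * u ^ j) ^ m * (starRingEnd ℂ) (((ρ:ℂ) * u ^ j) ^ m'))
        = if m = m' then ((N : ℂ) * (ρ:ℝ) ^ (2*m)) else 0 := by
    intro m hm m' hm'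
    have hterm : ∀ j, ((ρ:ℂ) * u ^ j) ^ m * (starRingEnd ℂ) (((ρ:ℂ) * u ^ j) ^ m')
        = ((ρ:ℂ)^(m+m')) * (u ^ ((m:ℤ) - (m':ℤ)))^j := by
      intro j
      have hz : u ≠ 0 := hprim.ne_zero hN
      have c1 : (starRingEnd ℂ) (((ρ:ℂ) * u ^ j) ^ m') = (ρ:ℂ)^m' * (u⁻¹)^(j*m') := by
        rw [map_pow, _root_.map_mul, Complex.conj_ofReal, map_pow, hconj, mul_pow, ← pow_mul]
      have c2 : ((ρ:ℂ) * u ^ j)^m = (ρ:ℂ)^m * u^(j*m) := by rw [mul_pow, ← pow_mul]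
      have c3 : u ^ (j*m) * (u⁻¹)^(j*m') = (u ^ ((m:ℤ) - (m':ℤ)))^j := by
        rw [← zpow_natCast u (j*m), ← zpow_natCast u⁻¹ (j*m'), _root_.inv_zpow, ← _root_.zpow_neg,
          ← zpow_add₀ hz, ← zpow_natCast (u ^ ((m:ℤ) - (m':ℤ))) j, ← _root_.zpow_mul]
        congr 1
        push_cast
        ring
      rw [c1, c2, ← c3]
      ring
    simp only [hterm]
    rw [← Finset.mul_sum]
    by_cases hmm : m = m'
    · subst hmm
      simp only [sub_self, zpow_zero, one_pow, Finset.sum_const, Finset.card_range,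
        nsmul_eq_mul, mul_one]
      push_cast
      rw [pow_add, two_mul]
      push_cast
      ring
    · rw [if_neg hmm]
      have hd : ((m:ℤ) - (m':ℤ)) ≠ 0 := by
        simp only [ne_eq, sub_eq_zero]
        exact_mod_cast hmm
      have he : u ^ ((m:ℤ) - (m':ℤ)) ≠ 1 := by
        intro h
        rw [hprim.zpow_eq_one_iff_dvd] at h
        simp only [Finset.mem_range] at hm hm'
        have hlt : |(m:ℤ) - (m':ℤ)| < (N:ℤ) := by
          rw [abs_lt]
          omega
        have := Int.eq_zero_of_abs_lt_dvd h hlt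
        exact hd this
      rw [geom_sum_eq he N]
      have heN : (u ^ ((m:ℤ) - (m':ℤ))) ^ N = 1 := by
        rw [← zpow_natCast (u ^ ((m:ℤ) - (m':ℤ))) N, ← _root_.zpow_mul, mul_comm,
          _root_.zpow_mul, zpow_natCast, huN, _root_.one_zpow]
      rw [heN]
      simp
  -- now assemble
  apply Complex.ofReal_injective
  push_cast
  calc (∑ j ∈ Finset.range N, (sqnormC (∑ m ∈ Finset.range N, ((ρ:ℂ) * u ^ j) ^ m • b m) : ℂ))
      = ∑ j ∈ Finset.range N, ∑ m ∈ Finset.range N, ∑ m' ∈ Finset.range N,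
          (((ρ:ℂ) * u ^ j) ^ m * (starRingEnd ℂ) (((ρ:ℂ) * u ^ j) ^ m')) * cip (b m) (b m') := by
        refine Finset.sum_congr rfl fun j _ => ?_
        rw [← cip_self, cip_sum_left]
        refine Finset.sum_congr rfl fun m _ => ?_
        rw [cip_smul_left, cip_sum_right]
        rw [Finset.mul_sum]
        refine Finset.sum_congr rfl fun m' _ => ?_
        rw [cip_smul_right]
        ring
    _ = ∑ m ∈ Finset.range N, ∑ m' ∈ Finset.range N,
          (∑ j ∈ Finset.range N, ((ρ:ℂ) * u ^ j) ^ m * (starRingEnd ℂ) (((ρ:ℂ) * u ^ j) ^ m'))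
            * cip (b m) (b m') := by
        rw [Finset.sum_comm]
        refine Finset.sum_congr rfl fun m _ => ?_
        rw [Finset.sum_comm]
        refine Finset.sum_congr rfl fun m' _ => ?_
        rw [Finset.sum_mul]
    _ = ∑ m ∈ Finset.range N, ((N:ℂ) * (ρ:ℝ) ^ (2*m)) * cip (b m) (b m) := by
        refine Finset.sum_congr rfl fun m hm => ?_
        rw [Finset.sum_eq_single m]
        · rw [key m hm m hm, if_pos rfl]
        · intro m' hm' hne
          rw [key m hm m' hm', if_neg (fun h => hne h.symm), zero_mul]
        · intro h; exact absurd hm h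
    _ = (N:ℂ) * ∑ m ∈ Finset.range N, ((ρ:ℝ):ℂ) ^ (2*m) * (sqnormC (b m) : ℂ) := by
        rw [Finset.mul_sum]
        refine Finset.sum_congr rfl fun m _ => ?_
        rw [cip_self]
        push_cast
        ring

/-- real Cauchy-Schwarz, sqrt form -/
lemma sum_mul_le_sqrt {ι : Type*} (sf : Finset ι) (a b : ι → ℝ)
    (ha : ∀ i ∈ sf, 0 ≤ a i) (hb : ∀ i ∈ sf, 0 ≤ b i) :
    ∑ i ∈ sf, a i * b i ≤ Real.sqrt (∑ i ∈ sf, a i ^ 2) * Real.sqrt (∑ i ∈ sf, b i ^ 2) := by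
  have h1 : (∑ i ∈ sf, a i * b i) ^ 2 ≤ (∑ i ∈ sf, a i ^ 2) * (∑ i ∈ sf, b i ^ 2) :=
    Finset.sum_mul_sq_le_sq_mul_sq sf a b
  have h2 : 0 ≤ ∑ i ∈ sf, a i * b i :=
    Finset.sum_nonneg fun i hi => mul_nonneg (ha i hi) (hb i hi)
  calc ∑ i ∈ sf, a i * b i = Real.sqrt ((∑ i ∈ sf, a i * b i)^2) := (Real.sqrt_sq h2).symm
  _ ≤ Real.sqrt ((∑ i ∈ sf, a i ^ 2) * (∑ i ∈ sf, b i ^ 2)) := Real.sqrt_le_sqrt h1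
  _ = _ := Real.sqrt_mul (Finset.sum_nonneg fun i _ => sq_nonneg _) _

/-- triangle sum swap -/
lemma sum_triangle_swap {M : Type*} [AddCommMonoid M] (N : ℕ) (f : ℕ → ℕ → M) :
    ∑ n ∈ Finset.range N, ∑ k ∈ Finset.range (n+1), f n k
      = ∑ k ∈ Finset.range N, ∑ n ∈ Finset.Ico k N, f n k := by
  rw [Finset.sum_comm']
  intro n k
  simp only [Finset.mem_range, Finset.mem_Ico]
  omega

lemma geom_partial_le {x : ℝ} (h0 : 0 ≤ x) (h1 : x < 1) (N : ℕ) :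
    ∑ n ∈ Finset.range N, x ^ n ≤ (1 - x)⁻¹ :=
  sum_le_hasSum (Finset.range N) (fun _ _ => pow_nonneg h0 _) (hasSum_geometric_of_lt_one h0 h1)

end SchurAux

section dirrev

open SchurAux

variable {r t : ℕ} (s : ℕ → Matrix (Fin r) (Fin t) ℂ)

set_option maxHeartbeats 2000000 in
lemma dir_rev
    (hconv : ∀ z ∈ Metric.ball (0 : ℂ) 1, ∀ i j, Summable fun n => z ^ n * s n i j)
    (hyp : ∀ g : ℕ →₀ (Fin t → ℂ), ∀ M : ℕ,
        ∑ n ∈ Finset.range M,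
            sqnormC (∑ k ∈ Finset.range (n + 1), (s (n - k)) *ᵥ g k) ≤
          ∑ k ∈ g.support, sqnormC (g k)) :
    ∀ z ∈ Metric.ball (0 : ℂ) 1,
        ((1 : Matrix (Fin r) (Fin r) ℂ) -
          (Matrix.of fun i j => ∑' n, z ^ n * s n i j) *
            (Matrix.of fun i j => ∑' n, z ^ n * s n i j)ᴴ).PosSemidef := by
  intro z hz
  rw [SchurAux.posSemidef_iff]
  intro x
  set Sm : Matrix (Fin r) (Fin t) ℂ := Matrix.of fun i j => ∑' n, z ^ n * s n i j with hSm
  set ρ : ℝ := ‖z‖ with hρdef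
  have hρ0 : 0 ≤ ρ := norm_nonneg z
  have hρ1 : ρ < 1 := by rwa [Metric.mem_ball, dist_zero_right] at hz
  set q : ℝ := ρ ^ 2 with hqdef
  have hq0 : 0 ≤ q := sq_nonneg ρ
  have hq1 : q < 1 := by
    calc q = ρ^2 := rfl
    _ < 1 := by nlinarith
  have hmem : ((((1+ρ)/2 : ℝ)) : ℂ) ∈ Metric.ball (0 : ℂ) 1 := by
    rw [Metric.mem_ball, dist_zero_right, Complex.norm_real, Real.norm_eq_abs, abs_of_nonneg]
    · linarith
    · linarith
  have habs : ∀ i j, Summable fun n => ρ^n * ‖s n i j‖ := fun i j =>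
    summable_pow_mul_norm hρ0 hρ1 (hconv _ hmem i j)
  -- the sequence of partial "tail" vectors
  set zb : ℂ := (starRingEnd ℂ) z with hzb
  have hzbn : ‖zb‖ = ρ := by rw [hzb, RCLike.norm_conj]
  set F : ℕ → Fin t → ℂ := fun m => zb ^ m • ((s m)ᴴ *ᵥ x) with hF
  have hsum1 : ∀ (i : Fin r) (j : Fin t), Summable fun m => zb ^ m * (starRingEnd ℂ) (s m i j) * x i := by
    intro i j
    apply Summable.of_norm
    have : (fun m => ‖zb ^ m * (starRingEnd ℂ) (s m i j) * x i‖)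
        = fun m => (ρ^m * ‖s m i j‖) * ‖x i‖ := by
      funext m
      rw [norm_mul, norm_mul, norm_pow, hzbn, RCLike.norm_conj]
    rw [this]
    exact (habs i j).mul_right _
  have hFapp : ∀ m j, F m j = ∑ i, zb ^ m * (starRingEnd ℂ) (s m i j) * x i := by
    intro m j
    show zb ^ m * ((s m)ᴴ *ᵥ x) j = _
    simp only [Matrix.mulVec, dotProduct, Matrix.conjTranspose_apply, Finset.mul_sum]
    exact Finset.sum_congr rfl fun i _ => by rw [mul_assoc]; rfl
  have hFsum : ∀ j, Summable fun m => F m j := by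
    intro j
    rw [show (fun m => F m j) = fun m => ∑ i, zb ^ m * (starRingEnd ℂ) (s m i j) * x i from
      funext fun m => hFapp m j]
    exact summable_sum fun i _ => hsum1 i j
  set w : Fin t → ℂ := fun j => ∑' m, F m j with hw
  set W : ℕ → Fin t → ℂ := fun J => ∑ m ∈ Finset.range J, F m with hW
  -- identification of S(z)ᴴ x with w
  have hid : Smᴴ *ᵥ x = w := by
    funext j
    have e1 : (Smᴴ *ᵥ x) j = ∑ i, (starRingEnd ℂ) (Sm i j) * x i := by
      simp [Matrix.mulVec, dotProduct, Matrix.conjTranspose_apply]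
    rw [e1]
    have e2 : ∀ i : Fin r, (starRingEnd ℂ) (Sm i j) * x i
        = ∑' n, zb^n * (starRingEnd ℂ) (s n i j) * x i := by
      intro i
      have : (starRingEnd ℂ) (Sm i j) = ∑' n, zb^n * (starRingEnd ℂ) (s n i j) := by
        rw [hSm]
        show (starRingEnd ℂ) (∑' n, z ^ n * s n i j) = _
        rw [Complex.conj_tsum]
        exact tsum_congr fun n => by rw [_root_.map_mul, map_pow, hzb]
      rw [this, tsum_mul_right]
    rw [Finset.sum_congr rfl (fun i _ => e2 i)]
    rw [← Summable.tsum_finsetSum (fun i _ => hsum1 i j)]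
    refine tsum_congr fun m => ?_
    show _ = F m j
    rw [hFapp m j]
  -- key inequality for every N
  have key : ∀ N : ℕ, ∑ k ∈ Finset.range N, q^k * sqnormC (W (N - k))
      ≤ sqnormC x * (1 - q)⁻¹ := by
    intro N
    classical
    set gfun : ℕ → (Fin t → ℂ) := fun k => if k < N then zb ^ k • W (N - k) else 0 with hgfun
    have hg0 : ∀ k, k ∉ Finset.range N → gfun k = 0 := by
      intro k hk
      rw [Finset.mem_range] at hk
      simp only [hgfun, if_neg hk]
    set g : ℕ →₀ (Fin t → ℂ) :=
      Finsupp.onFinset (Finset.range N) gfun (fun k h => by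
        by_contra hk; exact h (hg0 k hk)) with hg
    have hgapp : ∀ k, g k = gfun k := fun k => rfl
    set c : ℕ → Fin r → ℂ := fun n => ∑ k ∈ Finset.range (n+1), s (n-k) *ᵥ g k with hc
    set G : ℝ := ∑ k ∈ Finset.range N, q^k * sqnormC (W (N - k)) with hG
    have hGnonneg : 0 ≤ G := Finset.sum_nonneg fun k _ =>
      mul_nonneg (pow_nonneg hq0 _) (sqnormC_nonneg _)
    -- the algebraic identity
    have hident : ∑ n ∈ Finset.range N, cip (c n) (zb^n • x) = (G : ℂ) := by
      have step1 : ∀ n ∈ Finset.range N, cip (c n) (zb ^ n • x)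
          = ∑ k ∈ Finset.range (n+1),
              z ^ n * (zb ^ k * cip (W (N - k)) ((s (n - k))ᴴ *ᵥ x)) := by
        intro n hn
        rw [hc]
        rw [cip_sum_left]
        refine Finset.sum_congr rfl fun k hk => ?_
        rw [Finset.mem_range] at hn hk
        have hkN : k < N := by omega
        rw [hgapp k]
        show cip (s (n-k) *ᵥ gfun k) (zb ^ n • x) = _
        rw [hgfun]
        simp only [if_pos hkN]
        rw [Matrix.mulVec_smul, cip_smul_left, cip_smul_right, cip_mulVec]
        have hcz : (starRingEnd ℂ) (zb ^ n) = z ^ n := by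
          rw [map_pow, hzb, Complex.conj_conj]
        rw [hcz]
        ring
      rw [Finset.sum_congr rfl step1, sum_triangle_swap]
      have step2 : ∀ k ∈ Finset.range N, ∑ n ∈ Finset.Ico k N,
          z ^ n * (zb ^ k * cip (W (N-k)) ((s (n-k))ᴴ *ᵥ x))
            = ((q^k * sqnormC (W (N-k)) : ℝ) : ℂ) := by
        intro k hk
        rw [Finset.sum_Ico_eq_sum_range]
        have hWk : W (N - k) = ∑ m ∈ Finset.range (N - k), F m := rfl
        calc ∑ m ∈ Finset.range (N - k),
              z ^ (k + m) * (zb ^ k * cip (W (N-k)) ((s ((k+m)-k))ᴴ *ᵥ x))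
            = zb^k * z^k * ∑ m ∈ Finset.range (N-k),
                z ^ m * cip (W (N-k)) ((s m)ᴴ *ᵥ x) := by
              rw [Finset.mul_sum]
              refine Finset.sum_congr rfl fun m _ => ?_
              have hm : (k + m) - k = m := by omega
              rw [hm, pow_add]
              ring
          _ = zb^k * z^k * cip (W (N-k)) (W (N-k)) := by
              congr 1
              conv_lhs => rw [← Finset.sum_congr rfl (fun m _ => rfl)]
              rw [show cip (W (N-k)) (W (N-k)) = cip (W (N-k)) (∑ m ∈ Finset.range (N-k), F m)
                from by rw [← hWk]]
              rw [cip_sum_right]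
              refine Finset.sum_congr rfl fun m _ => ?_
              have : F m = zb ^ m • ((s m)ᴴ *ᵥ x) := rfl
              rw [this, cip_smul_right, map_pow, hzb, Complex.conj_conj]
          _ = ((q^k * sqnormC (W (N-k)) : ℝ) : ℂ) := by
              rw [cip_self]
              have : zb^k * z^k = ((q^k : ℝ) : ℂ) := by
                rw [← mul_pow, hzb, mul_comm ((starRingEnd ℂ) z) z, Complex.mul_conj']
                rw [hqdef, hρdef]
                push_cast
                ring
              rw [this]
              push_cast
              ring
      rw [Finset.sum_congr rfl step2, hG]
      push_cast
      ring
    -- bounding using the hypothesis and Cauchy-Schwarz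
    have hhyp : ∑ n ∈ Finset.range N, sqnormC (c n) ≤ G := by
      refine le_trans (hyp g N) ?_
      have hsub : g.support ⊆ Finset.range N := Finsupp.support_onFinset_subset
      refine le_trans (Finset.sum_le_sum_of_subset_of_nonneg hsub
        (fun k _ _ => sqnormC_nonneg _)) ?_
      rw [hG]
      apply le_of_eq
      refine Finset.sum_congr rfl fun k hk => ?_
      rw [hgapp k]
      show sqnormC (gfun k) = _
      rw [hgfun]
      simp only [if_pos (Finset.mem_range.mp hk)]
      rw [sqnormC_smul, norm_pow, hzbn]
      rw [hqdef, ← pow_mul, ← pow_mul, mul_comm 2 k]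
    have hcs : G ≤ Real.sqrt (∑ n ∈ Finset.range N, sqnormC (c n))
        * Real.sqrt (∑ n ∈ Finset.range N, q^n * sqnormC x) := by
      have hGre : G = (∑ n ∈ Finset.range N, cip (c n) (zb^n • x)).re := by
        rw [hident, Complex.ofReal_re]
      rw [hGre]
      calc (∑ n ∈ Finset.range N, cip (c n) (zb^n • x)).re
          ≤ ‖∑ n ∈ Finset.range N, cip (c n) (zb^n • x)‖ := Complex.re_le_norm _
        _ ≤ ∑ n ∈ Finset.range N, ‖cip (c n) (zb^n • x)‖ := norm_sum_le _ _
        _ ≤ ∑ n ∈ Finset.range N, SchurAux.enorm (c n) * SchurAux.enorm (zb^n • x) :=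
            Finset.sum_le_sum fun n _ => norm_cip_le _ _
        _ ≤ Real.sqrt (∑ n ∈ Finset.range N, SchurAux.enorm (c n) ^ 2)
            * Real.sqrt (∑ n ∈ Finset.range N, SchurAux.enorm (zb^n • x) ^ 2) :=
            sum_mul_le_sqrt _ _ _ (fun n _ => enorm_nonneg _) (fun n _ => enorm_nonneg _)
        _ = Real.sqrt (∑ n ∈ Finset.range N, sqnormC (c n))
            * Real.sqrt (∑ n ∈ Finset.range N, q^n * sqnormC x) := by
            congr 2
            · exact Finset.sum_congr rfl fun n _ => enorm_sq _
            · refine Finset.sum_congr rfl fun n _ => ?_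
              rw [enorm_sq, sqnormC_smul, norm_pow, hzbn, hqdef, ← pow_mul, ← pow_mul,
                mul_comm 2 n]
    have hH : ∑ n ∈ Finset.range N, q^n * sqnormC x ≤ sqnormC x * (1-q)⁻¹ := by
      rw [← Finset.sum_mul]
      rw [mul_comm]
      exact mul_le_mul_of_nonneg_left (geom_partial_le hq0 hq1 N) (sqnormC_nonneg x)
    have hfin : G ≤ ∑ n ∈ Finset.range N, q^n * sqnormC x := by
      set H' : ℝ := ∑ n ∈ Finset.range N, q^n * sqnormC x with hH'
      have hH'0 : 0 ≤ H' := Finset.sum_nonneg fun n _ =>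
        mul_nonneg (pow_nonneg hq0 _) (sqnormC_nonneg _)
      have hstep : G ≤ Real.sqrt G * Real.sqrt H' := by
        refine le_trans hcs ?_
        apply mul_le_mul_of_nonneg_right _ (Real.sqrt_nonneg _)
        exact Real.sqrt_le_sqrt hhyp
      nlinarith [Real.sq_sqrt hGnonneg, Real.sq_sqrt hH'0, Real.sqrt_nonneg G,
        Real.sqrt_nonneg H', sq_nonneg (Real.sqrt G - Real.sqrt H'),
        sq_nonneg (Real.sqrt G + Real.sqrt H')]
    exact le_trans hfin hH
  -- pass to the limit
  rw [hid]
  have cont : ∀ k : ℕ, Filter.Tendsto (fun N => sqnormC (W (N - k)))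
      Filter.atTop (nhds (sqnormC w)) := by
    intro k
    have h1 : Filter.Tendsto (fun J => sqnormC (W J)) Filter.atTop (nhds (sqnormC w)) := by
      have : ∀ J, sqnormC (W J) = ∑ j, ‖W J j‖^2 := fun J => rfl
      simp only [this]
      rw [show sqnormC w = ∑ j, ‖w j‖^2 from rfl]
      apply tendsto_finset_sum
      intro j _
      have hWj : Filter.Tendsto (fun J => W J j) Filter.atTop (nhds (w j)) := by
        have h2 := (hFsum j).hasSum.tendsto_sum_nat
        have : ∀ J, W J j = ∑ m ∈ Finset.range J, F m j := by
          intro J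
          show (∑ m ∈ Finset.range J, F m) j = _
          rw [Finset.sum_apply]
        simp only [this]
        exact h2
      exact (((continuous_pow 2).comp continuous_norm).tendsto _).comp hWj
    exact h1.comp (Filter.tendsto_sub_atTop_nat k)
  have step2 : ∀ K : ℕ, (∑ k ∈ Finset.range K, q^k) * sqnormC w ≤ sqnormC x * (1-q)⁻¹ := by
    intro K
    have hev : ∀ᶠ N in Filter.atTop,
        ∑ k ∈ Finset.range K, q^k * sqnormC (W (N-k)) ≤ sqnormC x * (1-q)⁻¹ := by
      filter_upwards [Filter.eventually_ge_atTop K] with N hN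
      calc ∑ k ∈ Finset.range K, q^k * sqnormC (W (N-k))
          ≤ ∑ k ∈ Finset.range N, q^k * sqnormC (W (N-k)) :=
            Finset.sum_le_sum_of_subset_of_nonneg (Finset.range_subset_range.mpr hN)
              (fun k _ _ => mul_nonneg (pow_nonneg hq0 _) (sqnormC_nonneg _))
        _ ≤ _ := key N
    have htend : Filter.Tendsto (fun N => ∑ k ∈ Finset.range K, q^k * sqnormC (W (N-k)))
        Filter.atTop (nhds (∑ k ∈ Finset.range K, q^k * sqnormC w)) :=
      tendsto_finset_sum _ (fun k _ => ((cont k).const_mul _))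
    have hle := le_of_tendsto htend hev
    rwa [Finset.sum_mul]
  have hgeo : Filter.Tendsto (fun K => (∑ k ∈ Finset.range K, q^k) * sqnormC w)
      Filter.atTop (nhds ((1-q)⁻¹ * sqnormC w)) :=
    ((hasSum_geometric_of_lt_one hq0 hq1).tendsto_sum_nat).mul_const _
  have hfinal := le_of_tendsto hgeo (Filter.Eventually.of_forall step2)
  have h1q : 0 < 1 - q := by linarith
  calc sqnormC w = (1-q) * ((1-q)⁻¹ * sqnormC w) := by field_simp
  _ ≤ (1-q) * (sqnormC x * (1-q)⁻¹) := mul_le_mul_of_nonneg_left hfinal (le_of_lt h1q)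
  _ = sqnormC x := by field_simp

end dirrev

section dirfwd

open SchurAux

namespace SchurAux

lemma enorm_neg {q : ℕ} (v : Fin q → ℂ) : enorm (-v) = enorm v := by
  rw [enorm_eq_norm, enorm_eq_norm]
  exact norm_neg _

lemma enorm_le_sum_norm {q : ℕ} (v : Fin q → ℂ) : enorm v ≤ ∑ i, ‖v i‖ := by
  rw [enorm]
  calc Real.sqrt (sqnormC v) ≤ Real.sqrt ((∑ i, ‖v i‖)^2) := by
        apply Real.sqrt_le_sqrt
        exact Finset.sum_sq_le_sq_sum_of_nonneg (fun i _ => norm_nonneg _)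
  _ = ∑ i, ‖v i‖ := Real.sqrt_sq (Finset.sum_nonneg fun i _ => norm_nonneg _)

lemma enorm_mulVec_le {q q' : ℕ} (A : Matrix (Fin q) (Fin q') ℂ) (v : Fin q' → ℂ) :
    enorm (A *ᵥ v) ≤ (∑ i, ∑ j, ‖A i j‖) * enorm v := by
  calc enorm (A *ᵥ v) ≤ ∑ i, ‖(A *ᵥ v) i‖ := enorm_le_sum_norm _
  _ ≤ ∑ i, ∑ j, ‖A i j‖ * enorm v := by
      apply Finset.sum_le_sum; intro i _
      calc ‖(A *ᵥ v) i‖ = ‖∑ j, A i j * v j‖ := rfl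
      _ ≤ ∑ j, ‖A i j * v j‖ := norm_sum_le _ _
      _ = ∑ j, ‖A i j‖ * ‖v j‖ := by simp [norm_mul]
      _ ≤ ∑ j, ‖A i j‖ * enorm v := Finset.sum_le_sum fun j _ =>
          mul_le_mul_of_nonneg_left (norm_apply_le_enorm v j) (norm_nonneg _)
  _ = _ := by rw [Finset.sum_mul]; exact Finset.sum_congr rfl fun i _ => (Finset.sum_mul _ _ _).symm

lemma mulVec_sumv {q q' : ℕ} {ι : Type*} (A : Matrix (Fin q) (Fin q') ℂ) (sf : Finset ι)
    (v : ι → Fin q' → ℂ) : A *ᵥ (∑ i ∈ sf, v i) = ∑ i ∈ sf, A *ᵥ v i := by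
  ext i; simp [Matrix.mulVec, dotProduct, Finset.mul_sum, Finset.sum_apply]
  exact Finset.sum_comm

lemma sum_mulVecv {q q' : ℕ} {ι : Type*} (sf : Finset ι) (A : ι → Matrix (Fin q) (Fin q') ℂ)
    (v : Fin q' → ℂ) : (∑ i ∈ sf, A i) *ᵥ v = ∑ i ∈ sf, A i *ᵥ v := by
  ext i
  simp [Matrix.mulVec, dotProduct, Finset.sum_mul, Finset.sum_apply, Matrix.sum_apply]
  exact Finset.sum_comm

end SchurAux

variable {r t : ℕ}

set_option maxHeartbeats 4000000 in
lemma dir_fwd (s : ℕ → Matrix (Fin r) (Fin t) ℂ)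
    (hconv : ∀ z ∈ Metric.ball (0 : ℂ) 1, ∀ i j, Summable fun n => z ^ n * s n i j)
    (hyp : ∀ z ∈ Metric.ball (0 : ℂ) 1,
        ((1 : Matrix (Fin r) (Fin r) ℂ) -
          (Matrix.of fun i j => ∑' n, z ^ n * s n i j) *
            (Matrix.of fun i j => ∑' n, z ^ n * s n i j)ᴴ).PosSemidef) :
    ∀ g : ℕ →₀ (Fin t → ℂ), ∀ M : ℕ,
        ∑ n ∈ Finset.range M, sqnormC (∑ k ∈ Finset.range (n + 1), (s (n - k)) *ᵥ g k) ≤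
          ∑ k ∈ g.support, sqnormC (g k) := by
  intro g M
  classical
  set c : ℕ → Fin r → ℂ := fun n => ∑ k ∈ Finset.range (n+1), s (n-k) *ᵥ g k with hc
  set RHS : ℝ := ∑ k ∈ g.support, sqnormC (g k) with hRHS
  have hRHS0 : 0 ≤ RHS := Finset.sum_nonneg fun k _ => sqnormC_nonneg _
  set B : ℕ := (g.support.sup id) + 1 with hB
  have hsupp : g.support ⊆ Finset.range B := by
    intro k hk
    rw [Finset.mem_range, hB]
    exact Nat.lt_succ_of_le (Finset.le_sup (f := id) hk)
  have hρstep : ∀ ρ : ℝ, 0 < ρ → ρ < 1 →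
      ∑ n ∈ Finset.range M, ρ^(2*n) * sqnormC (c n) ≤ RHS := by
    intro ρ hρ0 hρ1
    have habs : ∀ i j, Summable fun n => ρ^n * ‖s n i j‖ := by
      intro i j
      apply summable_pow_mul_norm (le_of_lt hρ0) hρ1
      apply hconv
      rw [Metric.mem_ball, dist_zero_right, Complex.norm_real, Real.norm_eq_abs,
        abs_of_nonneg (by linarith)]
      linarith
    have key : ∀ δ : ℝ, 0 < δ →
        ∑ n ∈ Finset.range M, ρ^(2*n) * sqnormC (c n) ≤ (1+δ)^2 * RHS := by
      intro δ hδ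
      have htail : Filter.Tendsto
          (fun P => ∑ p : Fin r × Fin t, ∑' n, ρ^(n+P) * ‖s (n+P) p.1 p.2‖)
          Filter.atTop (nhds 0) := by
        have h0 : (0:ℝ) = ∑ _p : Fin r × Fin t, (0:ℝ) := by simp
        rw [h0]
        apply tendsto_finset_sum
        intro p _
        exact tendsto_sum_nat_add (fun n => ρ^n * ‖s n p.1 p.2‖)
      have hev := (htail.eventually_lt_const hδ).and
        (Filter.eventually_ge_atTop (max M 1))
      obtain ⟨P, hPδ, hPM⟩ := hev.exists
      have hM_le_P : M ≤ P := le_trans (le_max_left _ _) hPM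
      have hP1 : 1 ≤ P := le_trans (le_max_right _ _) hPM
      set N : ℕ := P + B with hN
      have hN0 : N ≠ 0 := by omega
      set u : ℂ := Complex.exp (2 * (Real.pi:ℂ) * Complex.I / N) with hu
      have hunorm : ‖u‖ = 1 := by
        have heq : 2 * (Real.pi:ℂ) * Complex.I / N = ((2 * Real.pi / N : ℝ) : ℂ) * Complex.I := by
          push_cast; ring
        rw [hu, heq]
        exact Complex.norm_exp_ofReal_mul_I _
      set zj : ℕ → ℂ := fun j => (ρ:ℂ) * u ^ j with hzj
      have hzjn : ∀ j, ‖zj j‖ = ρ := by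
        intro j
        rw [hzj]
        simp [norm_mul, norm_pow, hunorm, abs_of_pos hρ0]
      have hzjball : ∀ j, zj j ∈ Metric.ball (0:ℂ) 1 := by
        intro j
        rw [Metric.mem_ball, dist_zero_right, hzjn j]
        exact hρ1
      have hsumz : ∀ j i jj, Summable fun n => (zj j)^n * s n i jj :=
        fun j => hconv _ (hzjball j)
      set gh : ℂ → (Fin t → ℂ) := fun zz => ∑ k ∈ g.support, zz^k • (g k : Fin t → ℂ) with hgh
      set TP : ℂ → Matrix (Fin r) (Fin t) ℂ := fun zz => ∑ n ∈ Finset.range P, zz^n • s n with hTP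
      set Smz : ℂ → Matrix (Fin r) (Fin t) ℂ :=
        fun zz => Matrix.of fun i j => ∑' n, zz^n * s n i j with hSmz
      set b : ℕ → Fin r → ℂ := fun m => ∑ p ∈ (Finset.range P ×ˢ g.support).filter
        (fun p => p.1 + p.2 = m), s p.1 *ᵥ g p.2 with hb
      -- (F1) polynomial identity
      have hF1 : ∀ zz : ℂ, ∑ m ∈ Finset.range N, zz^m • b m = TP zz *ᵥ gh zz := by
        intro zz
        have lhs1 : ∑ m ∈ Finset.range N, zz^m • b m
            = ∑ m ∈ Finset.range N, ∑ p ∈ (Finset.range P ×ˢ g.support).filter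
                (fun p => p.1 + p.2 = m), zz^(p.1+p.2) • (s p.1 *ᵥ g p.2) := by
          refine Finset.sum_congr rfl fun m _ => ?_
          rw [hb, Finset.smul_sum]
          refine Finset.sum_congr rfl fun p hp => ?_
          rw [(Finset.mem_filter.mp hp).2]
        have hmaps : ∀ p ∈ Finset.range P ×ˢ g.support,
            (fun p : ℕ × ℕ => p.1 + p.2) p ∈ Finset.range N := by
          intro p hp
          rw [Finset.mem_product] at hp
          have h1 := Finset.mem_range.mp hp.1
          have h2 := Finset.mem_range.mp (hsupp hp.2)
          simp only [Finset.mem_range]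
          show p.1 + p.2 < N
          omega
        rw [lhs1, Finset.sum_fiberwise_of_maps_to hmaps
          (fun p : ℕ × ℕ => zz^(p.1+p.2) • (s p.1 *ᵥ g p.2))]
        rw [Finset.sum_product]
        rw [hTP, hgh, sum_mulVecv]
        refine Finset.sum_congr rfl fun n _ => ?_
        rw [Matrix.smul_mulVec, mulVec_sumv, Finset.smul_sum]
        refine Finset.sum_congr rfl fun k _ => ?_
        rw [Matrix.mulVec_smul, smul_smul, pow_add]
      -- (F2) coefficients agree below M
      have hF2 : ∀ m, m < M → c m = b m := by
        intro m hm
        have hmP : m < P := lt_of_lt_of_le hm hM_le_P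
        show (∑ k ∈ Finset.range (m+1), s (m-k) *ᵥ g k)
          = ∑ p ∈ (Finset.range P ×ˢ g.support).filter (fun p => p.1 + p.2 = m),
              s p.1 *ᵥ g p.2
        set T : Finset ℕ := g.support.filter (fun k => k ≤ m) with hT
        have hTsub : T ⊆ Finset.range (m+1) := by
          intro k hk
          rw [Finset.mem_range]
          have := (Finset.mem_filter.mp hk).2
          omega
        have step1 : ∑ k ∈ Finset.range (m+1), s (m-k) *ᵥ g k = ∑ k ∈ T, s (m-k) *ᵥ g k := by
          symm
          apply Finset.sum_subset hTsub
          intro k hk hkT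
          have hg0 : g k = 0 := by
            by_contra hne
            exact hkT (Finset.mem_filter.mpr ⟨Finsupp.mem_support_iff.mpr hne,
              by rw [Finset.mem_range] at hk; omega⟩)
          rw [hg0, Matrix.mulVec_zero]
        rw [step1]
        refine Finset.sum_nbij' (i := fun k => ((m - k, k) : ℕ × ℕ)) (j := fun p => p.2)
          ?_ ?_ ?_ ?_ ?_
        · intro k hk
          have hk2 := (Finset.mem_filter.mp hk).2
          have hk1 := (Finset.mem_filter.mp hk).1
          rw [Finset.mem_filter, Finset.mem_product]
          refine ⟨⟨Finset.mem_range.mpr (by omega), hk1⟩, by omega⟩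
        · intro p hp
          rw [Finset.mem_filter, Finset.mem_product] at hp
          rw [hT, Finset.mem_filter]
          exact ⟨hp.1.2, by omega⟩
        · intro k _
          rfl
        · intro p hp
          rw [Finset.mem_filter, Finset.mem_product] at hp
          have h2 := hp.2
          show ((m - p.2, p.2) : ℕ × ℕ) = p
          rw [Prod.ext_iff]
          refine ⟨?_, rfl⟩
          show m - p.2 = p.1
          omega
        · intro k _
          rfl
      -- (F3) identify gh with the truncated series
      have hsub2 : g.support ⊆ Finset.range N := by
        refine subset_trans hsupp ?_
        apply Finset.range_subset_range.mpr
        omega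
      have hgh_eq : ∀ zz : ℂ, ∑ m ∈ Finset.range N, zz^m • (g m : Fin t → ℂ) = gh zz := by
        intro zz
        rw [hgh]
        symm
        apply Finset.sum_subset hsub2
        intro k _ hks
        rw [Finsupp.notMem_support_iff.mp hks, smul_zero]
      have hgnorm_eq : ∑ m ∈ Finset.range N, ρ^(2*m) * sqnormC (g m)
          = ∑ k ∈ g.support, ρ^(2*k) * sqnormC (g k) := by
        symm
        apply Finset.sum_subset hsub2
        intro k _ hks
        rw [Finsupp.notMem_support_iff.mp hks]
        simp [sqnormC]
      -- contraction at each z_j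
      have hcontr : ∀ (j : ℕ) (v : Fin t → ℂ), sqnormC (Smz (zj j) *ᵥ v) ≤ sqnormC v := by
        intro j v
        exact sq_mulVec_le _ ((posSemidef_iff _).mp (hyp (zj j) (hzjball j))) v
      -- tail bound
      set δP : ℝ := ∑ p : Fin r × Fin t, ∑' n, ρ^(n+P) * ‖s (n+P) p.1 p.2‖ with hδP
      have hentry : ∀ (j : ℕ) i jj, ‖Smz (zj j) i jj - TP (zj j) i jj‖
          ≤ ∑' n, ρ^(n+P) * ‖s (n+P) i jj‖ := by
        intro j i jj
        have hsume : Summable fun n => (zj j)^n * s n i jj := hsumz j i jj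
        have hsplit := Summable.sum_add_tsum_nat_add (f := fun n => (zj j)^n * s n i jj) P hsume
        have hTPe : TP (zj j) i jj = ∑ n ∈ Finset.range P, (zj j)^n * s n i jj := by
          rw [hTP]
          simp [Matrix.sum_apply, Matrix.smul_apply, smul_eq_mul]
        have hSe : Smz (zj j) i jj = ∑' n, (zj j)^n * s n i jj := rfl
        rw [hSe, hTPe, ← hsplit, add_sub_cancel_left]
        have hnorms : ∀ n, ‖(zj j)^(n+P) * s (n+P) i jj‖ = ρ^(n+P) * ‖s (n+P) i jj‖ := by
          intro n
          rw [norm_mul, norm_pow, hzjn j]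
        have hsumn : Summable fun n => ‖(zj j)^(n+P) * s (n+P) i jj‖ := by
          rw [show (fun n => ‖(zj j)^(n+P) * s (n+P) i jj‖)
            = fun n => ρ^(n+P) * ‖s (n+P) i jj‖ from funext hnorms]
          exact (summable_nat_add_iff P).mpr (habs i jj)
        refine le_trans (norm_tsum_le_tsum_norm hsumn) (le_of_eq (tsum_congr hnorms))
      have herr : ∀ j : ℕ, SchurAux.enorm ((Smz (zj j) - TP (zj j)) *ᵥ gh (zj j))
          ≤ δ * SchurAux.enorm (gh (zj j)) := by
        intro j
        refine le_trans (enorm_mulVec_le _ _) ?_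
        apply mul_le_mul_of_nonneg_right _ (enorm_nonneg _) |>.trans
          (mul_le_mul_of_nonneg_right (le_of_lt hPδ) (enorm_nonneg _))
        calc ∑ i, ∑ jj, ‖(Smz (zj j) - TP (zj j)) i jj‖
            ≤ ∑ i, ∑ jj, ∑' n, ρ^(n+P) * ‖s (n+P) i jj‖ := by
              apply Finset.sum_le_sum; intro i _
              apply Finset.sum_le_sum; intro jj _
              rw [Matrix.sub_apply]
              exact hentry j i jj
          _ = δP := by
              rw [hδP, Fintype.sum_prod_type]
      -- per-point bound
      have hgj : ∀ j : ℕ, sqnormC (TP (zj j) *ᵥ gh (zj j)) ≤ (1+δ)^2 * sqnormC (gh (zj j)) := by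
        intro j
        have h1 : SchurAux.enorm (TP (zj j) *ᵥ gh (zj j)) ≤ (1+δ) * SchurAux.enorm (gh (zj j)) := by
          have hdecomp : TP (zj j) *ᵥ gh (zj j)
              = Smz (zj j) *ᵥ gh (zj j) + (-((Smz (zj j) - TP (zj j)) *ᵥ gh (zj j))) := by
            rw [Matrix.sub_mulVec]
            abel
          rw [hdecomp]
          refine le_trans (enorm_triangle _ _) ?_
          have e1 : SchurAux.enorm (Smz (zj j) *ᵥ gh (zj j)) ≤ SchurAux.enorm (gh (zj j)) :=
            Real.sqrt_le_sqrt (hcontr j _)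
          have e2 := herr j
          rw [enorm_neg]
          linarith [e1, e2]
        calc sqnormC (TP (zj j) *ᵥ gh (zj j)) = SchurAux.enorm (TP (zj j) *ᵥ gh (zj j))^2 :=
            (enorm_sq _).symm
        _ ≤ ((1+δ) * SchurAux.enorm (gh (zj j)))^2 := by
            apply pow_le_pow_left₀ (enorm_nonneg _) h1
        _ = (1+δ)^2 * sqnormC (gh (zj j)) := by rw [mul_pow, enorm_sq]
      -- Parseval
      have hpar_b : ∑ j ∈ Finset.range N, sqnormC (∑ m ∈ Finset.range N, (zj j)^m • b m)
          = N * ∑ m ∈ Finset.range N, ρ^(2*m) * sqnormC (b m) := by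
        have := parseval (q := r) N hN0 ρ b
        simpa [hzj, hu] using this
      have hpar_g : ∑ j ∈ Finset.range N, sqnormC (∑ m ∈ Finset.range N, (zj j)^m • (g m : Fin t → ℂ))
          = N * ∑ m ∈ Finset.range N, ρ^(2*m) * sqnormC (g m) := by
        have := parseval (q := t) N hN0 ρ (fun m => (g m : Fin t → ℂ))
        simpa [hzj, hu] using this
      -- main chain
      have main : (N:ℝ) * ∑ m ∈ Finset.range N, ρ^(2*m) * sqnormC (b m)
          ≤ (1+δ)^2 * ((N:ℝ) * ∑ m ∈ Finset.range N, ρ^(2*m) * sqnormC (g m)) := by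
        rw [← hpar_b, ← hpar_g]
        calc ∑ j ∈ Finset.range N, sqnormC (∑ m ∈ Finset.range N, (zj j)^m • b m)
            = ∑ j ∈ Finset.range N, sqnormC (TP (zj j) *ᵥ gh (zj j)) := by
              refine Finset.sum_congr rfl fun j _ => ?_
              rw [hF1 (zj j)]
          _ ≤ ∑ j ∈ Finset.range N, (1+δ)^2 * sqnormC (gh (zj j)) :=
              Finset.sum_le_sum fun j _ => hgj j
          _ = (1+δ)^2 * ∑ j ∈ Finset.range N,
                sqnormC (∑ m ∈ Finset.range N, (zj j)^m • (g m : Fin t → ℂ)) := by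
              rw [Finset.mul_sum]
              refine Finset.sum_congr rfl fun j _ => ?_
              rw [hgh_eq (zj j)]
      have hNpos : (0:ℝ) < (N:ℝ) := by
        have : 0 < N := Nat.pos_of_ne_zero hN0
        exact_mod_cast this
      have chain2 : ∑ m ∈ Finset.range N, ρ^(2*m) * sqnormC (b m)
          ≤ (1+δ)^2 * ∑ m ∈ Finset.range N, ρ^(2*m) * sqnormC (g m) := by
        have hmain2 : (N:ℝ) * ∑ m ∈ Finset.range N, ρ^(2*m) * sqnormC (b m)
            ≤ (N:ℝ) * ((1+δ)^2 * ∑ m ∈ Finset.range N, ρ^(2*m) * sqnormC (g m)) := by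
          calc (N:ℝ) * ∑ m ∈ Finset.range N, ρ^(2*m) * sqnormC (b m)
              ≤ (1+δ)^2 * ((N:ℝ) * ∑ m ∈ Finset.range N, ρ^(2*m) * sqnormC (g m)) := main
            _ = (N:ℝ) * ((1+δ)^2 * ∑ m ∈ Finset.range N, ρ^(2*m) * sqnormC (g m)) := by ring
        exact le_of_mul_le_mul_left hmain2 hNpos
      have chain1 : ∑ n ∈ Finset.range M, ρ^(2*n) * sqnormC (c n)
          ≤ ∑ m ∈ Finset.range N, ρ^(2*m) * sqnormC (b m) := by
        have heq : ∑ n ∈ Finset.range M, ρ^(2*n) * sqnormC (c n)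
            = ∑ n ∈ Finset.range M, ρ^(2*n) * sqnormC (b n) := by
          refine Finset.sum_congr rfl fun n hn => ?_
          rw [hF2 n (Finset.mem_range.mp hn)]
        rw [heq]
        apply Finset.sum_le_sum_of_subset_of_nonneg
          (Finset.range_subset_range.mpr (by omega))
        intro m _ _
        exact mul_nonneg (pow_nonneg (le_of_lt hρ0) _) (sqnormC_nonneg _)
      have chain3 : ∑ m ∈ Finset.range N, ρ^(2*m) * sqnormC (g m) ≤ RHS := by
        rw [hgnorm_eq, hRHS]
        apply Finset.sum_le_sum
        intro k _
        apply mul_le_of_le_one_left (sqnormC_nonneg _)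
        exact pow_le_one₀ (le_of_lt hρ0) (le_of_lt hρ1)
      calc ∑ n ∈ Finset.range M, ρ^(2*n) * sqnormC (c n)
          ≤ ∑ m ∈ Finset.range N, ρ^(2*m) * sqnormC (b m) := chain1
        _ ≤ (1+δ)^2 * ∑ m ∈ Finset.range N, ρ^(2*m) * sqnormC (g m) := chain2
        _ ≤ (1+δ)^2 * RHS := by
            apply mul_le_mul_of_nonneg_left chain3 (by positivity)
    -- ε argument
    apply le_of_forall_pos_le_add
    intro ε hε
    set δ : ℝ := min 1 (ε / (3 * (RHS + 1))) with hδdef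
    have hδ0 : 0 < δ := lt_min one_pos (by positivity)
    have h1 := key δ hδ0
    have hδ1 : δ ≤ 1 := min_le_left _ _
    have hδ2 : δ ≤ ε / (3 * (RHS + 1)) := min_le_right _ _
    have hδ3 : δ * (3 * (RHS + 1)) ≤ ε := by
      rw [← le_div_iff₀ (by positivity)]
      exact hδ2
    have hexp : (1+δ)^2 * RHS ≤ RHS + ε := by
      nlinarith [mul_nonneg (le_of_lt hδ0) hRHS0, hRHS0, le_of_lt hδ0,
        mul_nonneg (mul_nonneg (le_of_lt hδ0) (le_of_lt hδ0)) hRHS0]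
    linarith [h1]
  -- now let ρ → 1⁻
  have hlim : Filter.Tendsto (fun ρ : ℝ => ∑ n ∈ Finset.range M, ρ^(2*n) * sqnormC (c n))
      (nhdsWithin 1 (Set.Iio 1)) (nhds (∑ n ∈ Finset.range M, sqnormC (c n))) := by
    have hcont : Continuous (fun ρ : ℝ => ∑ n ∈ Finset.range M, ρ^(2*n) * sqnormC (c n)) := by
      apply continuous_finset_sum
      intro n _
      exact (continuous_pow (2*n)).mul continuous_const
    have h2 := hcont.tendsto 1
    simp only [one_pow, one_mul] at h2
    exact h2.mono_left nhdsWithin_le_nhds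
  have hev2 : ∀ᶠ ρ in nhdsWithin (1:ℝ) (Set.Iio 1),
      ∑ n ∈ Finset.range M, ρ^(2*n) * sqnormC (c n) ≤ RHS := by
    filter_upwards [Ioo_mem_nhdsLT_of_mem (Set.mem_Ioc.mpr ⟨zero_lt_one, le_refl (1:ℝ)⟩)]
      with ρ hρ
    exact hρstep ρ hρ.1 hρ.2
  exact le_of_tendsto hlim hev2

end dirfwd

end

/-- Let `S(z) = Σ_n s_n zⁿ` (converging on the open unit disk).  Then `S` takes
contractive values on the disk (`I - S(z)S(z)ᴴ ⪰ 0`) if and only if the lower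
triangular block Toeplitz operator `(s_{j-k})_{j≥k}` is a contraction from
`ℓ²(ℕ, ℂ^t)` into `ℓ²(ℕ, ℂ^r)`. -/
theorem contractive_iff_toeplitz_contraction (r t : ℕ)
    (s : ℕ → Matrix (Fin r) (Fin t) ℂ)
    (hconv : ∀ z ∈ Metric.ball (0 : ℂ) 1, ∀ i j,
      Summable fun n => z ^ n * s n i j) :
    (∀ z ∈ Metric.ball (0 : ℂ) 1,
        ((1 : Matrix (Fin r) (Fin r) ℂ) -
          (Matrix.of fun i j => ∑' n, z ^ n * s n i j) *
            (Matrix.of fun i j => ∑' n, z ^ n * s n i j)ᴴ).PosSemidef) ↔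
    (∀ g : ℕ →₀ (Fin t → ℂ), ∀ M : ℕ,
        ∑ n ∈ Finset.range M,
            sqnormC (∑ k ∈ Finset.range (n + 1), (s (n - k)) *ᵥ g k) ≤
          ∑ k ∈ g.support, sqnormC (g k)) := by
  constructor
  · intro h
    exact dir_fwd s hconv h
  · intro h
    exact dir_rev s hconv h
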